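/- Let d be odd. The parity operator P = (1/d) Σ_{p ∈ (ZMod d)^2} D_{-p} satisfies P^2 = 1, is Hermitian, and has trace 1; consequently P has eigenvalue +1 with multiplicity (d+1)/2 and eigenvalue -1 with multiplicity (d-1)/2. -/

import Mathlib

open Matrix Complex

/-- The Weyl–Heisenberg displacement operators in dimension `d`. -/
noncomputable def Disp (d : ℕ) [NeZero d] (p : ZMod d × ZMod d) :
    Matrix (ZMod d) (ZMod d) ℂ :=
  Matrix.of fun r s =>
    (-Complex.exp (Real.pi * Complex.I / d)) ^ (p.1.val * p.2.val + 2 * p.2.val * s.val) *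
      (if r = s + p.1 then 1 else 0)

/-- The parity operator `P = (1/d) ∑_p D_{-p}`. -/
noncomputable def Parity (d : ℕ) [NeZero d] : Matrix (ZMod d) (ZMod d) ℂ :=
  (d : ℂ)⁻¹ • ∑ p : ZMod d × ZMod d, Disp d (-p)

/-- The rank of an idempotent complex matrix equals its trace. -/
lemma aux_rank_idem {n : Type*} [Fintype n] [DecidableEq n] (E : Matrix n n ℂ)
    (h : E * E = E) : (E.rank : ℂ) = E.trace := by
  have hcomp : E.mulVecLin ∘ₗ E.mulVecLin = E.mulVecLin := by
    rw [← Matrix.mulVecLin_mul, h]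
  have hproj : LinearMap.IsProj (LinearMap.range E.mulVecLin) E.mulVecLin := by
    refine ⟨fun x => LinearMap.mem_range_self _ x, ?_⟩
    rintro x ⟨y, rfl⟩
    exact LinearMap.congr_fun hcomp y
  have htr := hproj.trace
  rw [Matrix.rank, ← htr, LinearMap.trace_eq_matrix_trace ℂ (Pi.basisFun ℂ n),
    LinearMap.toMatrix_eq_toMatrix', ← Matrix.toLin'_apply', LinearMap.toMatrix'_toLin']

/-- If `M * M = M + M` and `trace M = 2t`, then `rank M = t`. -/
lemma aux_rank_half {n : Type*} [Fintype n] [DecidableEq n] (M : Matrix n n ℂ)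
    (hM : M * M = M + M) (t : ℕ) (ht : M.trace = 2 * t) : M.rank = t := by
  set E : Matrix n n ℂ := (2 : ℂ)⁻¹ • M with hE
  have hidem : E * E = E := by
    rw [hE, Matrix.smul_mul, Matrix.mul_smul, hM, smul_smul, smul_add, ← add_smul]
    congr 1
    norm_num
  have hrank : M.rank = E.rank := by
    have h1 : E.mulVecLin = (2 : ℂ)⁻¹ • M.mulVecLin := by
      ext v i
      simp [hE, Matrix.mulVecLin_apply, Matrix.smul_mulVec]
    have hr : LinearMap.range E.mulVecLin = LinearMap.range M.mulVecLin := by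
      rw [h1, LinearMap.range_smul _ _ (by norm_num : (2:ℂ)⁻¹ ≠ 0)]
    rw [Matrix.rank, Matrix.rank, hr]
  have h2 := aux_rank_idem E hidem
  have h3 : E.trace = (t : ℂ) := by
    rw [hE, Matrix.trace_smul, ht, smul_eq_mul]
    field_simp
  rw [h3] at h2
  rw [hrank]
  exact_mod_cast h2

/-- τ is a primitive d-th root of unity for odd d. -/
lemma tau_prim (d : ℕ) [NeZero d] (hd : Odd d) :
    IsPrimitiveRoot (-Complex.exp (Real.pi * Complex.I / d)) d := by
  have hd0 : d ≠ 0 := NeZero.ne d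
  have hζ := Complex.isPrimitiveRoot_exp d hd0
  set k : ℕ := (d + 1) / 2 with hk
  have hk2 : k * 2 = d + 1 := by
    obtain ⟨m, hm⟩ := hd
    omega
  have hdC : (d : ℂ) ≠ 0 := Nat.cast_ne_zero.mpr hd0
  have heq : Complex.exp (2 * Real.pi * Complex.I / d) ^ k
      = -Complex.exp (Real.pi * Complex.I / d) := by
    rw [← Complex.exp_nat_mul]
    have h2 : (k : ℂ) * 2 = (d : ℂ) + 1 := by exact_mod_cast hk2
    have harg : (k : ℂ) * (2 * Real.pi * Complex.I / d)
        = Real.pi * Complex.I + Real.pi * Complex.I / d := by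
      have h3 : (d : ℂ) * (d : ℂ)⁻¹ = 1 := mul_inv_cancel₀ hdC
      rw [div_eq_mul_inv, div_eq_mul_inv]
      linear_combination (Real.pi * Complex.I * (d : ℂ)⁻¹) * h2 + (Real.pi * Complex.I) * h3
    rw [harg, Complex.exp_add, Complex.exp_pi_mul_I]
    ring
  have hcop : Nat.Coprime k d := by
    have h1 : Nat.Coprime (d + 1) d := by simp
    exact Nat.Coprime.coprime_dvd_left ⟨2, hk2.symm⟩ h1
  have h := hζ.pow_of_coprime k hcop
  rwa [heq] at h

/-- The parity operator is the explicit permutation matrix `r ↦ -r`. -/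
lemma parity_eq (d : ℕ) [NeZero d] (hd : Odd d) :
    Parity d = Matrix.of (fun r s => if r = (-s : ZMod d) then (1 : ℂ) else 0) := by
  have hτ := tau_prim d hd
  set τ := -Complex.exp (Real.pi * Complex.I / d) with hτdef
  have hd0 : d ≠ 0 := NeZero.ne d
  have hdC : (d : ℂ) ≠ 0 := Nat.cast_ne_zero.mpr hd0
  ext r s
  simp only [Parity, Matrix.smul_apply, Matrix.sum_apply, smul_eq_mul, Matrix.of_apply]
  have h1 : ∑ p : ZMod d × ZMod d, Disp d (-p) r s = ∑ p : ZMod d × ZMod d, Disp d p r s :=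
    Fintype.sum_equiv (Equiv.neg _) _ _ (fun p => by simp)
  rw [h1]
  have geo : ∀ c : ℕ, ∑ b : ZMod d, (τ ^ c) ^ b.val = if d ∣ c then (d : ℂ) else 0 := by
    intro c
    have hsum : ∑ b : ZMod d, (τ ^ c) ^ b.val = ∑ i ∈ Finset.range d, (τ ^ c) ^ i := by
      refine Finset.sum_nbij' (fun b : ZMod d => b.val) (fun i : ℕ => (i : ZMod d))
        (fun a _ => Finset.mem_range.mpr (ZMod.val_lt a))
        (fun a _ => Finset.mem_univ _)
        (fun a _ => ZMod.natCast_rightInverse a)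
        (fun i hi => ZMod.val_natCast_of_lt (Finset.mem_range.mp hi))
        (fun a _ => rfl)
    rw [hsum]
    by_cases hdvd : d ∣ c
    · have h2 : τ ^ c = 1 := (hτ.pow_eq_one_iff_dvd c).mpr hdvd
      rw [if_pos hdvd]
      simp [h2]
    · have hne : τ ^ c ≠ 1 := fun h => hdvd ((hτ.pow_eq_one_iff_dvd c).mp h)
      have hpow : (τ ^ c) ^ d = 1 := by
        rw [← pow_mul, mul_comm, pow_mul, hτ.pow_eq_one, one_pow]
      rw [if_neg hdvd, geom_sum_eq hne, hpow, sub_self, zero_div]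
  have hsummand : ∀ p : ZMod d × ZMod d, Disp d p r s =
      (if p.1 = r - s then (1 : ℂ) else 0) * (τ ^ (p.1.val + 2 * s.val)) ^ p.2.val := by
    intro p
    simp only [Disp, Matrix.of_apply, ← hτdef]
    have hcond : (r = s + p.1) ↔ (p.1 = r - s) := by
      constructor <;> intro h <;> simp [h]
    rw [if_congr hcond rfl rfl, mul_comm]
    congr 1
    rw [← pow_mul]
    congr 1
    ring
  simp only [hsummand]
  rw [Fintype.sum_prod_type]
  simp only [ite_mul, one_mul, zero_mul]
  have hswap : ∀ x : ZMod d,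
      (∑ b : ZMod d, if x = r - s then (τ ^ (x.val + 2 * s.val)) ^ b.val else 0)
      = if x = r - s then ∑ b : ZMod d, (τ ^ (x.val + 2 * s.val)) ^ b.val else 0 := by
    intro x
    split <;> simp
  simp only [hswap]
  rw [Finset.sum_ite_eq' Finset.univ (r - s)
    (fun a => ∑ b : ZMod d, (τ ^ (a.val + 2 * s.val)) ^ b.val)]
  simp only [Finset.mem_univ, if_true]
  rw [geo]
  have hcast : ((((r - s).val + 2 * s.val : ℕ)) : ZMod d) = r + s := by
    rw [Nat.cast_add, Nat.cast_mul, ZMod.natCast_rightInverse (r - s),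
      ZMod.natCast_rightInverse s]
    push_cast
    ring
  have hiff : (d ∣ (r - s).val + 2 * s.val) ↔ (r = -s) := by
    rw [← ZMod.natCast_eq_zero_iff, hcast, add_eq_zero_iff_eq_neg]
  rw [if_congr hiff rfl rfl]
  by_cases h : r = -s
  · simp [h, inv_mul_cancel₀ hdC]
  · simp [h]

theorem stmt14 (d : ℕ) [NeZero d] (hd : Odd d) :
    Parity d * Parity d = 1 ∧
    (Parity d).IsHermitian ∧
    (Parity d).trace = 1 ∧
    (1 + Parity d).rank = (d + 1) / 2 ∧
    (1 - Parity d).rank = (d - 1) / 2 := by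
  have hd0 : d ≠ 0 := NeZero.ne d
  rw [parity_eq d hd]
  set P : Matrix (ZMod d) (ZMod d) ℂ :=
    Matrix.of (fun r s => if r = (-s : ZMod d) then (1 : ℂ) else 0) with hP
  have hsq : P * P = 1 := by
    ext r s
    simp only [Matrix.mul_apply, hP, Matrix.of_apply, Matrix.one_apply, ite_mul, one_mul,
      zero_mul]
    have hsw : ∀ x : ZMod d, (if r = -x then (if x = -s then (1 : ℂ) else 0) else 0)
        = if x = -s then (if r = -x then (1 : ℂ) else 0) else 0 := by
      intro x
      by_cases h1 : r = -x <;> by_cases h2 : x = -s <;> simp [h1, h2]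
    simp only [hsw]
    rw [Finset.sum_ite_eq' Finset.univ (-s) (fun j => if r = -j then (1 : ℂ) else 0)]
    simp [neg_neg]
  have hherm : P.IsHermitian := by
    ext r s
    simp only [Matrix.conjTranspose_apply, hP, Matrix.of_apply]
    by_cases h : s = -r
    · have h2 : r = -s := by simp [h]
      rw [if_pos h, if_pos h2]
      simp
    · have h2 : ¬ r = -s := fun hh => h (by simp [hh])
      rw [if_neg h, if_neg h2]
      simp
  have hiff0 : ∀ r : ZMod d, (r = -r) ↔ (r = 0) := by
    intro r
    have hu : IsUnit (2 : ZMod d) := by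
      have : IsUnit ((2 : ℕ) : ZMod d) :=
        (ZMod.isUnit_iff_coprime 2 d).mpr (Nat.coprime_two_left.mpr hd)
      simpa using this
    constructor
    · intro h
      have h2 : (2 : ZMod d) * r = 0 := by
        rw [two_mul]
        nth_rewrite 1 [h]
        ring
      exact (hu.mul_right_eq_zero).mp h2
    · intro h; simp [h]
  have htr : P.trace = 1 := by
    simp only [Matrix.trace, Matrix.diag, hP, Matrix.of_apply]
    have : ∀ r : ZMod d, (if r = -r then (1 : ℂ) else 0) = (if r = 0 then (1 : ℂ) else 0) :=
      fun r => if_congr (hiff0 r) rfl rfl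
    simp only [this]
    rw [Finset.sum_ite_eq' Finset.univ (0 : ZMod d) (fun _ => (1 : ℂ))]
    simp
  refine ⟨hsq, hherm, htr, ?_, ?_⟩
  · apply aux_rank_half
    · rw [add_mul, one_mul, mul_add, mul_one, hsq]
      abel
    · rw [Matrix.trace_add, Matrix.trace_one, htr]
      have : 2 * (((d + 1) / 2 : ℕ) : ℂ) = ((2 * ((d + 1) / 2) : ℕ) : ℂ) := by push_cast; ring
      rw [this]
      have h2 : 2 * ((d + 1) / 2) = d + 1 := by
        obtain ⟨m, hm⟩ := hd; omega
      rw [h2]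
      simp [ZMod.card]
  · apply aux_rank_half
    · rw [sub_mul, one_mul, mul_sub, mul_one, hsq]
      abel
    · rw [Matrix.trace_sub, Matrix.trace_one, htr]
      have : 2 * (((d - 1) / 2 : ℕ) : ℂ) = ((2 * ((d - 1) / 2) : ℕ) : ℂ) := by push_cast; ring
      rw [this]
      have h2 : 2 * ((d - 1) / 2) = d - 1 := by
        obtain ⟨m, hm⟩ := hd; omega
      rw [h2]
      have h3 : ((d - 1 : ℕ) : ℂ) = (d : ℂ) - 1 := by
        have : 1 ≤ d := Nat.one_le_iff_ne_zero.mpr hd0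
        push_cast [this]
        ring
      rw [h3]
      simp [ZMod.card]
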